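/- Let α be a primitive third root of unity and let G ⊆ GL₅(ℂ) be the group generated by all 5×5 permutation matrices and the diagonal matrix diag(α, α, α, α, α²). If H is a 5×5 complex Hermitian matrix satisfying ᵗM·H·conj(M) = H for every M ∈ G, then H is a scalar multiple of the identity matrix. -/

import Mathlib

open Matrix

private lemma exists_perm_fin5 (a b c d : Fin 5) (hab : a ≠ b) (hcd : c ≠ d) :
    ∃ σ : Equiv.Perm (Fin 5), σ a = c ∧ σ b = d := by
  refine ⟨Equiv.swap (Equiv.swap a c b) d * Equiv.swap a c, ?_, ?_⟩
  · simp only [Equiv.Perm.mul_apply, Equiv.swap_apply_left]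
    have h1 : c ≠ Equiv.swap a c b := fun h =>
      hab ((Equiv.swap a c).injective (by rw [Equiv.swap_apply_left]; exact h))
    exact Equiv.swap_apply_of_ne_of_ne h1 hcd
  · simp [Equiv.Perm.mul_apply]

/-- If a Hermitian 5×5 matrix `H` satisfies `ᵗM·H·conj(M) = H` for every `M` in the
group generated by the permutation matrices and `diag(α,α,α,α,α²)` (the complex
reflection group `G(3,3,5)`, with `α` a primitive third root of unity), then `H` is a
scalar multiple of the identity. (All generators have finite order, so the generated
monoid coincides with the generated group.) -/
theorem stmt_2 (α : ℂ) (hα3 : α ^ 3 = 1) (hα1 : α ≠ 1)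
    (H : Matrix (Fin 5) (Fin 5) ℂ) (hH : H.IsHermitian)
    (hinv : ∀ M ∈ Submonoid.closure
      (insert (Matrix.diagonal ![α, α, α, α, α ^ 2])
        {P : Matrix (Fin 5) (Fin 5) ℂ |
          ∃ σ : Equiv.Perm (Fin 5), P = fun i j => if σ j = i then 1 else 0}),
      Mᵀ * H * M.map (starRingEnd ℂ) = H) :
    ∃ c : ℂ, H = c • (1 : Matrix (Fin 5) (Fin 5) ℂ) := by
  -- basic facts about α
  have hns : Complex.normSq α = 1 := by
    have h3 : Complex.normSq α ^ 3 = 1 := by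
      rw [← map_pow, hα3]; simp
    have h0 : 0 ≤ Complex.normSq α := Complex.normSq_nonneg α
    nlinarith [sq_nonneg (Complex.normSq α - 1), sq_nonneg (Complex.normSq α + 1)]
  have hconj : (starRingEnd ℂ) α = α ^ 2 := by
    have h1 : (starRingEnd ℂ) α * α = 1 := by
      rw [mul_comm, Complex.mul_conj, hns]; simp
    have h2 : α ^ 2 * α = 1 := by rw [← pow_succ, hα3]
    calc (starRingEnd ℂ) α = (starRingEnd ℂ) α * (α ^ 2 * α) := by rw [h2, mul_one]
      _ = ((starRingEnd ℂ) α * α) * α ^ 2 := by ring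
      _ = α ^ 2 := by rw [h1, one_mul]
  have hα2 : α ^ 2 ≠ 1 := by
    intro h
    apply hα1
    calc α = α * α ^ 2 := by rw [h, mul_one]
      _ = 1 := by rw [← pow_succ', hα3]
  -- permutation invariance
  have hperm : ∀ σ : Equiv.Perm (Fin 5), ∀ i j, H (σ i) (σ j) = H i j := by
    intro σ i j
    have hmem : (fun i j => if σ j = i then (1:ℂ) else 0) ∈ Submonoid.closure
        (insert (Matrix.diagonal ![α, α, α, α, α ^ 2])
          {P : Matrix (Fin 5) (Fin 5) ℂ |
            ∃ σ : Equiv.Perm (Fin 5), P = fun i j => if σ j = i then 1 else 0}) :=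
      Submonoid.subset_closure (Set.mem_insert_iff.mpr (Or.inr ⟨σ, rfl⟩))
    have h := congrFun (congrFun (hinv _ hmem) i) j
    simpa [Matrix.mul_apply, Matrix.map_apply, Matrix.transpose_apply, Finset.mul_sum,
      ite_mul, mul_ite, Matrix.transpose, Matrix.map, Matrix.of_apply] using h
  -- diagonal invariance gives H 0 4 = 0
  have hdiag : H 0 4 = 0 := by
    have hmem : Matrix.diagonal ![α, α, α, α, α ^ 2] ∈ Submonoid.closure
        (insert (Matrix.diagonal ![α, α, α, α, α ^ 2])
          {P : Matrix (Fin 5) (Fin 5) ℂ |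
            ∃ σ : Equiv.Perm (Fin 5), P = fun i j => if σ j = i then 1 else 0}) :=
      Submonoid.subset_closure (Set.mem_insert _ _)
    have h := congrFun (congrFun (hinv _ hmem) 0) 4
    have h' : α * H 0 4 * (starRingEnd ℂ) (α ^ 2) = H 0 4 := by
      simpa [Matrix.diagonal_transpose, Matrix.diagonal_map, Matrix.mul_apply,
        Matrix.diagonal_apply, Finset.mul_sum, ite_mul, mul_ite] using h
    rw [map_pow, hconj] at h'
    have h'' : H 0 4 * (α ^ 2 - 1) = 0 := by
      linear_combination h' - H 0 4 * α ^ 2 * hα3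
    rcases mul_eq_zero.mp h'' with h | h
    · exact h
    · exact absurd (by linear_combination h) hα2
  refine ⟨H 0 0, ?_⟩
  ext i j
  by_cases hij : i = j
  · subst hij
    obtain ⟨σ, hσ0, _⟩ := exists_perm_fin5 0 4 i (if i = 4 then 0 else 4)
      (by decide) (by split <;> simp_all)
    have := hperm σ 0 0
    rw [hσ0] at this
    simp [this]
  · obtain ⟨σ, hσ0, hσ4⟩ := exists_perm_fin5 0 4 i j (by decide) hij
    have := hperm σ 0 4
    rw [hσ0, hσ4] at this
    rw [this, hdiag]; simp [Matrix.one_apply, hij]
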